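/- Suppose G has no antitriangles and exactly one coloring 𝔠 of size χ(G). Then for every transversal T of 𝔠 there exists a shallow clique minor of G of size χ(G) traversed by T. -/

import Mathlib

open SimpleGraph

/-- `A` is an anticlique (independent set) of `G`. -/
def IsAnticlique {V : Type*} (G : SimpleGraph V) (A : Finset V) : Prop :=
  ∀ x ∈ A, ∀ y ∈ A, ¬ G.Adj x y

/-- A coloring of `G`: a partition of the vertex set into nonempty anticliques. -/
def IsColoring {V : Type*} (G : SimpleGraph V) (c : Finset (Finset V)) : Prop :=
  (∀ A ∈ c, A.Nonempty) ∧
  (∀ A ∈ c, ∀ B ∈ c, A ≠ B → Disjoint A B) ∧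
  (∀ v : V, ∃ A ∈ c, v ∈ A) ∧
  (∀ A ∈ c, IsAnticlique G A)

/-- `A` induces a connected subgraph of `G`. -/
def ConnSet {V : Type*} (G : SimpleGraph V) (A : Finset V) : Prop :=
  (G.induce (↑A : Set V)).Connected

/-- A Kempe-coloring: any two distinct classes induce a connected subgraph. -/
def IsKempe {V : Type*} [DecidableEq V] (G : SimpleGraph V) (c : Finset (Finset V)) : Prop :=
  IsColoring G c ∧ ∀ A ∈ c, ∀ B ∈ c, A ≠ B → ConnSet G (A ∪ B)

/-- Two vertex sets are adjacent if some edge joins them. -/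
def SetsAdj {V : Type*} (G : SimpleGraph V) (A B : Finset V) : Prop :=
  ∃ a ∈ A, ∃ b ∈ B, G.Adj a b

/-- A clique minor: pairwise disjoint, pairwise adjacent, nonempty connected subsets. -/
def IsCliqueMinor {V : Type*} (G : SimpleGraph V) (K : Finset (Finset V)) : Prop :=
  (∀ A ∈ K, A.Nonempty) ∧ (∀ A ∈ K, ConnSet G A) ∧
  (∀ A ∈ K, ∀ B ∈ K, A ≠ B → Disjoint A B ∧ SetsAdj G A B)

/-- A shallow clique minor: a clique minor all of whose branch sets have size 1 or 2. -/
def IsShallowCliqueMinor {V : Type*} (G : SimpleGraph V) (K : Finset (Finset V)) : Prop :=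
  IsCliqueMinor G K ∧ ∀ A ∈ K, A.card ≤ 2

/-- `T` is a transversal of the family `K`: it meets each member in exactly one vertex. -/
def Traversed {V : Type*} [DecidableEq V] (T : Finset V) (K : Finset (Finset V)) : Prop :=
  ∀ A ∈ K, (T ∩ A).card = 1

/-- `c` is a coloring of `G` of minimum size, i.e. of size `χ(G)`. -/
def MinColoring {V : Type*} (G : SimpleGraph V) (c : Finset (Finset V)) : Prop :=
  IsColoring G c ∧ ∀ d, IsColoring G d → c.card ≤ d.card

/-- `G` has no antitriangle (independent set of size 3). -/
def HasNoAntitriangle {V : Type*} (G : SimpleGraph V) : Prop :=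
  ¬ ∃ A : Finset V, A.card = 3 ∧ IsAnticlique G A

set_option linter.unusedSectionVars false
section Helpers
variable {V : Type*} [Fintype V] [DecidableEq V] {G : SimpleGraph V} {c : Finset (Finset V)}
  {T : Finset V} {tv tb : Finset V → V}

lemma connSet_singleton (G : SimpleGraph V) (a : V) : ConnSet G {a} := by
  unfold ConnSet
  haveI : Nonempty (↑(↑({a} : Finset V) : Set V)) := ⟨⟨a, by simp⟩⟩
  refine ⟨?_⟩
  intro u v
  have hu := u.2; have hv := v.2
  simp only [Finset.coe_singleton, Set.mem_singleton_iff] at hu hv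
  have huv : u = v := Subtype.ext (hu.trans hv.symm)
  exact huv ▸ Reachable.refl u

lemma connSet_pair {a b : V} (h : G.Adj a b) : ConnSet G {a, b} := by
  unfold ConnSet
  haveI : Nonempty (↑(↑({a, b} : Finset V) : Set V)) := ⟨⟨a, by simp⟩⟩
  refine ⟨?_⟩
  intro u v
  have hu := u.2; have hv := v.2
  simp only [Finset.coe_insert, Finset.coe_singleton, Set.mem_insert_iff,
    Set.mem_singleton_iff] at hu hv
  rcases hu with hu | hu <;> rcases hv with hv | hv
  · exact (Subtype.ext (hu.trans hv.symm) : u = v) ▸ Reachable.refl u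
  · exact SimpleGraph.Adj.reachable (by
      show G.Adj u.1 v.1
      rw [hu, hv]; exact h)
  · exact SimpleGraph.Adj.reachable (by
      show G.Adj u.1 v.1
      rw [hu, hv]; exact h.symm)
  · exact (Subtype.ext (hu.trans hv.symm) : u = v) ▸ Reachable.refl u

lemma anticlique_pair {a b : V} (h : ¬ G.Adj a b) : IsAnticlique G {a, b} := by
  intro x hx y hy
  simp only [Finset.mem_insert, Finset.mem_singleton] at hx hy
  rcases hx with rfl | rfl <;> rcases hy with rfl | rfl
  · exact G.irrefl
  · exact h
  · exact fun h' => h h'.symm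
  · exact G.irrefl

lemma anticlique_triple {a b d : V} (h12 : ¬ G.Adj a b) (h13 : ¬ G.Adj a d)
    (h23 : ¬ G.Adj b d) : IsAnticlique G {a, b, d} := by
  intro x hx y hy
  simp only [Finset.mem_insert, Finset.mem_singleton] at hx hy
  rcases hx with rfl | rfl | rfl <;> rcases hy with rfl | rfl | rfl
  · exact G.irrefl
  · exact h12
  · exact h13
  · exact fun h' => h12 h'.symm
  · exact G.irrefl
  · exact h23
  · exact fun h' => h13 h'.symm
  · exact fun h' => h23 h'.symm
  · exact G.irrefl

lemma elt_ne (hcol : IsColoring G c) {A B : Finset V} (hA : A ∈ c) (hB : B ∈ c) (hne : A ≠ B)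
    {x y : V} (hx : x ∈ A) (hy : y ∈ B) : x ≠ y := by
  intro h
  exact (Finset.disjoint_left.mp (hcol.2.1 A hA B hB hne) hx) (h ▸ hy)

lemma class_card_le_two (hat : HasNoAntitriangle G) (hcol : IsColoring G c)
    {A : Finset V} (hA : A ∈ c) : A.card ≤ 2 := by
  by_contra h
  push_neg at h
  obtain ⟨S, hS, hScard⟩ := Finset.exists_subset_card_eq (s := A) (n := 3) h
  exact hat ⟨S, hScard, fun x hx y hy => hcol.2.2.2 A hA x (hS hx) y (hS hy)⟩

lemma swap_coloring (hcol : IsColoring G c) {D N : Finset (Finset V)}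
    (hD : D ⊆ c)
    (hcover : ∀ v : V, (∃ A ∈ D, v ∈ A) → ∃ B ∈ N, v ∈ B)
    (hsub : ∀ B ∈ N, ∀ v ∈ B, ∃ A ∈ D, v ∈ A)
    (hne : ∀ B ∈ N, B.Nonempty)
    (hanti : ∀ B ∈ N, IsAnticlique G B)
    (hdisj : ∀ B ∈ N, ∀ B' ∈ N, B ≠ B' → Disjoint B B') :
    IsColoring G ((c \ D) ∪ N) := by
  obtain ⟨h1, h2, h3, h4⟩ := hcol
  have oldnew : ∀ A ∈ c \ D, ∀ B ∈ N, Disjoint A B := by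
    intro A hA B hB
    rw [Finset.disjoint_left]
    intro v hvA hvB
    obtain ⟨A', hA'D, hvA'⟩ := hsub B hB v hvB
    have hne' : A ≠ A' := fun h => (Finset.mem_sdiff.mp hA).2 (h ▸ hA'D)
    exact Finset.disjoint_left.mp
      (h2 A (Finset.mem_sdiff.mp hA).1 A' (hD hA'D) hne') hvA hvA'
  refine ⟨?_, ?_, ?_, ?_⟩
  · intro A hA
    rcases Finset.mem_union.mp hA with h | h
    · exact h1 A (Finset.mem_sdiff.mp h).1
    · exact hne A h
  · intro A hA B hB hAB
    rcases Finset.mem_union.mp hA with hA' | hA' <;> rcases Finset.mem_union.mp hB with hB' | hB'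
    · exact h2 A (Finset.mem_sdiff.mp hA').1 B (Finset.mem_sdiff.mp hB').1 hAB
    · exact oldnew A hA' B hB'
    · exact (oldnew B hB' A hA').symm
    · exact hdisj A hA' B hB' hAB
  · intro v
    obtain ⟨A, hA, hvA⟩ := h3 v
    by_cases hAD : A ∈ D
    · obtain ⟨B, hB, hvB⟩ := hcover v ⟨A, hAD, hvA⟩
      exact ⟨B, Finset.mem_union_right _ hB, hvB⟩
    · exact ⟨A, Finset.mem_union_left _ (Finset.mem_sdiff.mpr ⟨hA, hAD⟩), hvA⟩
  · intro A hA
    rcases Finset.mem_union.mp hA with h | h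
    · exact h4 A (Finset.mem_sdiff.mp h).1
    · exact hanti A h

lemma swap_card {D N : Finset (Finset V)} (hD : D ⊆ c) (hNc : ∀ B ∈ N, B ∉ c) :
    ((c \ D) ∪ N).card = c.card - D.card + N.card := by
  rw [Finset.card_union_of_disjoint, Finset.card_sdiff_of_subset hD]
  rw [Finset.disjoint_left]
  intro B hB hBN
  exact hNc B hBN (Finset.mem_sdiff.mp hB).1

end Helpers
set_option linter.unusedSectionVars false
set_option maxHeartbeats 1000000
section Rotation
variable {V : Type*} [Fintype V] [DecidableEq V] {G : SimpleGraph V} {c : Finset (Finset V)}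

lemma no_rotation (hcol : IsColoring G c)
    (huniq : ∀ d, IsColoring G d → d.card = c.card → d = c)
    (X Y : Finset V → V) (l : List (Finset V))
    [NeZero l.length] (hlen : 2 ≤ l.length) (hnd : l.Nodup)
    (hmem : ∀ A ∈ l, A ∈ c)
    (hXY : ∀ A ∈ l, A = {X A, Y A} ∧ X A ≠ Y A)
    (hadj : ∀ i : Fin l.length, ¬ G.Adj (Y (l.get i)) (X (l.get (i + 1)))) :
    False := by
  classical
  have hgetinj : Function.Injective l.get := List.nodup_iff_injective_get.mp hnd
  have hgetmem : ∀ i : Fin l.length, l.get i ∈ l := fun i => List.get_mem l i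
  have hgetc : ∀ i : Fin l.length, l.get i ∈ c := fun i => hmem _ (hgetmem i)
  have hsucc_ne : ∀ i : Fin l.length, i + 1 ≠ i := by
    intro i h
    have h1 : (1 : Fin l.length) = 0 := by
      have := add_left_cancel (a := i) (b := 1) (c := 0) (by simpa using h)
      exact this
    have h2 : (1 : Fin l.length).val = (0 : Fin l.length).val := by rw [h1]
    rw [Fin.val_one', Fin.val_zero, Nat.mod_eq_of_lt (by omega)] at h2
    omega
  have hne_get : ∀ i j : Fin l.length, i ≠ j → l.get i ≠ l.get j :=
    fun i j h hh => h (hgetinj hh)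
  have hXmem : ∀ A ∈ l, X A ∈ A ∧ Y A ∈ A := by
    intro A hA
    obtain ⟨h1, _⟩ := hXY A hA
    constructor
    · have : X A ∈ ({X A, Y A} : Finset V) := Finset.mem_insert_self _ _
      rwa [← h1] at this
    · have : Y A ∈ ({X A, Y A} : Finset V) := by simp
      rwa [← h1] at this
  set np : Fin l.length → Finset V := fun i => {Y (l.get i), X (l.get (i + 1))} with hnp
  have hcross : ∀ i j : Fin l.length, i ≠ j → ∀ x ∈ l.get i, ∀ y ∈ l.get j, x ≠ y :=
    fun i j hij x hx y hy => elt_ne hcol (hgetc i) (hgetc j) (hne_get i j hij) hx hy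
  have hnpmemY : ∀ i : Fin l.length, Y (l.get i) ∈ np i := by intro i; simp [hnp]
  have hnpmemX : ∀ i : Fin l.length, X (l.get (i + 1)) ∈ np i := by intro i; simp [hnp]
  have hnpsub : ∀ i : Fin l.length, ∀ v ∈ np i,
      (v = Y (l.get i)) ∨ (v = X (l.get (i + 1))) := by
    intro i v hv
    simpa only [hnp, Finset.mem_insert, Finset.mem_singleton] using hv
  have hnpinj : Function.Injective np := by
    intro i j h
    by_contra hij
    have hY : Y (l.get i) ∈ np j := by rw [← h]; exact hnpmemY i
    rcases hnpsub j _ hY with hY | hY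
    · exact hcross i j hij _ ((hXmem _ (hgetmem i)).2) _ ((hXmem _ (hgetmem j)).2) hY
    · by_cases hij1 : i = j + 1
      · rw [← hij1] at hY
        exact (hXY _ (hgetmem i)).2 hY.symm
      · exact hcross i (j+1) hij1 _ ((hXmem _ (hgetmem i)).2) _
          ((hXmem _ (hgetmem (j+1))).1) hY
  set N : Finset (Finset V) := Finset.image np Finset.univ with hN
  set D : Finset (Finset V) := l.toFinset with hD
  have hmemD : ∀ i : Fin l.length, l.get i ∈ D := by
    intro i; rw [hD, List.mem_toFinset]; exact hgetmem i
  have hDsub : D ⊆ c := fun A hA => hmem A (by rwa [hD, List.mem_toFinset] at hA)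
  have hDcard : D.card = l.length := List.toFinset_card_of_nodup hnd
  have hNcard : N.card = l.length := by
    rw [hN, Finset.card_image_of_injective _ hnpinj, Finset.card_univ, Fintype.card_fin]
  have hNnotc : ∀ B ∈ N, B ∉ c := by
    intro B hB hBc
    obtain ⟨i, _, rfl⟩ := Finset.mem_image.mp hB
    have hYi' : Y (l.get i) ∈ l.get i := (hXmem _ (hgetmem i)).2
    have heq : np i = l.get i := by
      by_contra hne'
      exact Finset.disjoint_left.mp (hcol.2.1 _ hBc _ (hgetc i) hne') (hnpmemY i) hYi'
    have hX1 : X (l.get (i+1)) ∈ l.get i := by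
      have := hnpmemX i
      rwa [heq] at this
    exact hcross i (i+1) (fun h => hsucc_ne i h.symm) _ hX1 _
      ((hXmem _ (hgetmem (i+1))).1) rfl
  have hcol' : IsColoring G ((c \ D) ∪ N) := by
    apply swap_coloring hcol hDsub
    · rintro v ⟨A, hAD, hvA⟩
      rw [hD, List.mem_toFinset, List.mem_iff_get] at hAD
      obtain ⟨i, rfl⟩ := hAD
      have hv2 : v ∈ ({X (l.get i), Y (l.get i)} : Finset V) := by
        rw [← (hXY _ (hgetmem i)).1]; exact hvA
      simp only [Finset.mem_insert, Finset.mem_singleton] at hv2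
      rcases hv2 with rfl | rfl
      · refine ⟨np (i - 1), Finset.mem_image_of_mem _ (Finset.mem_univ _), ?_⟩
        have : np (i - 1) = {Y (l.get (i-1)), X (l.get (i - 1 + 1))} := rfl
        rw [this, sub_add_cancel]
        simp
      · exact ⟨np i, Finset.mem_image_of_mem _ (Finset.mem_univ _), hnpmemY i⟩
    · intro B hB v hv
      obtain ⟨i, _, rfl⟩ := Finset.mem_image.mp hB
      rcases hnpsub i v hv with rfl | rfl
      · exact ⟨l.get i, hmemD i, (hXmem _ (hgetmem i)).2⟩
      · exact ⟨l.get (i+1), hmemD (i+1), (hXmem _ (hgetmem (i+1))).1⟩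
    · intro B hB
      obtain ⟨i, _, rfl⟩ := Finset.mem_image.mp hB
      exact ⟨_, hnpmemY i⟩
    · intro B hB
      obtain ⟨i, _, rfl⟩ := Finset.mem_image.mp hB
      exact anticlique_pair (hadj i)
    · intro B hB B' hB' hBB'
      obtain ⟨i, _, rfl⟩ := Finset.mem_image.mp hB
      obtain ⟨j, _, rfl⟩ := Finset.mem_image.mp hB'
      have hij : i ≠ j := fun h => hBB' (h ▸ rfl)
      rw [Finset.disjoint_left]
      intro v hv hv'
      rcases hnpsub i v hv with rfl | h1
      · rcases hnpsub j _ hv' with h2 | h2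
        · exact hcross i j hij _ ((hXmem _ (hgetmem i)).2) _ ((hXmem _ (hgetmem j)).2) h2
        · by_cases hc1 : i = j + 1
          · rw [← hc1] at h2
            exact (hXY _ (hgetmem i)).2 h2.symm
          · exact hcross i (j+1) hc1 _ ((hXmem _ (hgetmem i)).2) _
              ((hXmem _ (hgetmem (j+1))).1) h2
      · rcases hnpsub j _ hv' with h2 | h2
        · rw [h1] at h2
          by_cases hc1 : j = i + 1
          · rw [← hc1] at h2
            exact (hXY _ (hgetmem j)).2 h2
          · exact hcross (i+1) j (fun h => hc1 h.symm) _ ((hXmem _ (hgetmem (i+1))).1) _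
              ((hXmem _ (hgetmem j)).2) h2
        · rw [h1] at h2
          have : i + 1 ≠ j + 1 := fun h => hij (add_right_cancel h)
          exact hcross (i+1) (j+1) this _ ((hXmem _ (hgetmem (i+1))).1) _
            ((hXmem _ (hgetmem (j+1))).1) h2
  have hcard' : ((c \ D) ∪ N).card = c.card := by
    have hle : l.length ≤ c.card := by
      rw [← hDcard]; exact Finset.card_le_card hDsub
    rw [swap_card hDsub hNnotc, hDcard, hNcard]
    omega
  have hceq := huniq _ hcol' hcard'
  have h0 : np 0 ∈ (c \ D) ∪ N :=
    Finset.mem_union_right _ (Finset.mem_image_of_mem _ (Finset.mem_univ _))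
  rw [hceq] at h0
  exact hNnotc _ (Finset.mem_image_of_mem _ (Finset.mem_univ _)) h0

end Rotation
section Sink
variable {V : Type*} [Fintype V] [DecidableEq V] {G : SimpleGraph V} {c : Finset (Finset V)}
  {T : Finset V} {tv tb : Finset V → V}

lemma sink_exists (hcol : IsColoring G c)
    (huniq : ∀ d, IsColoring G d → d.card = c.card → d = c)
    (htb : ∀ A ∈ c, A.card = 2 → A = {tv A, tb A} ∧ tv A ≠ tb A)
    {S : Finset (Finset V)} (hS : S.Nonempty)
    (hSc : ∀ A ∈ S, A ∈ c ∧ A.card = 2) :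
    ∃ A ∈ S, ∀ B ∈ S, A ≠ B → G.Adj (tb A) (tv B) := by
  classical
  by_contra hno
  push_neg at hno
  have hch : ∀ A : Finset V, ∃ B : Finset V,
      A ∈ S → (B ∈ S ∧ A ≠ B ∧ ¬ G.Adj (tb A) (tv B)) := by
    intro A
    by_cases hA : A ∈ S
    · obtain ⟨B, hB, h1, h2⟩ := hno A hA
      exact ⟨B, fun _ => ⟨hB, h1, h2⟩⟩
    · exact ⟨A, fun h => absurd h hA⟩
  choose f hf using hch
  obtain ⟨A₀, hA₀⟩ := hS
  set w : ℕ → Finset V := fun k => f^[k] A₀ with hw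
  have hwS : ∀ k, w k ∈ S := by
    intro k; induction k with
    | zero => exact hA₀
    | succ k ih =>
      have : w (k+1) = f (w k) := Function.iterate_succ_apply' f k A₀
      rw [this]; exact (hf _ ih).1
  have hwstep : ∀ k, w k ≠ w (k+1) ∧ ¬ G.Adj (tb (w k)) (tv (w (k+1))) := by
    intro k
    have h1 : w (k+1) = f (w k) := Function.iterate_succ_apply' f k A₀
    rw [h1]
    exact ⟨(hf _ (hwS k)).2.1, (hf _ (hwS k)).2.2⟩
  obtain ⟨i, hi, j, hj, hij, hwij⟩ :=
    Finset.exists_ne_map_eq_of_card_lt_of_maps_to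
      (by simp : S.card < (Finset.range (S.card + 1)).card)
      (fun k _ => hwS k)
  have hex : ∃ d, 0 < d ∧ ∃ k, w k = w (k + d) := by
    rcases Nat.lt_or_ge i j with h | h
    · exact ⟨j - i, by omega, i, by rw [hwij]; congr 1; omega⟩
    · have h' : j < i := by omega
      exact ⟨i - j, by omega, j, by rw [← hwij]; congr 1; omega⟩
  obtain ⟨hdpos, k0, hk0⟩ := Nat.find_spec hex
  set d := Nat.find hex with hd
  have hd2 : 2 ≤ d := by
    rcases Nat.lt_or_ge d 2 with h | h
    · have hd1 : d = 1 := by omega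
      rw [hd1] at hk0
      exact ((hwstep k0).1 hk0).elim
    · exact h
  have key : ∀ a b : ℕ, a < b → b < d → w (k0 + a) = w (k0 + b) → False := by
    intro a b hab hbd he
    exact Nat.find_min hex (by omega : b - a < d)
      ⟨by omega, k0 + a, by rw [he]; congr 1; omega⟩
  set l : List (Finset V) := (List.range d).map (fun m => w (k0 + m)) with hl
  have hllen : l.length = d := by simp [hl]
  have hlget : ∀ p : Fin l.length, l.get p = w (k0 + p.val) := by
    intro p
    simp [hl]
  have hlmem : ∀ A ∈ l, ∃ m, A = w m := by
    intro A hA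
    rw [hl, List.mem_map] at hA
    obtain ⟨m, _, rfl⟩ := hA
    exact ⟨k0 + m, rfl⟩
  have hnd : l.Nodup := by
    rw [List.nodup_iff_injective_get]
    intro p q hpq
    rw [hlget, hlget] at hpq
    by_contra hne
    have hvne : p.val ≠ q.val := fun h => hne (Fin.ext h)
    have hp : p.val < d := by rw [← hllen]; exact p.2
    have hq : q.val < d := by rw [← hllen]; exact q.2
    rcases Nat.lt_or_ge p.val q.val with h | h
    · exact key p.val q.val h hq hpq
    · exact key q.val p.val (by omega) hp hpq.symm
  haveI : NeZero l.length := ⟨by omega⟩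
  apply no_rotation hcol huniq tv tb l (by omega) hnd
  · intro A hA
    obtain ⟨m, rfl⟩ := hlmem A hA
    exact (hSc _ (hwS _)).1
  · intro A hA
    obtain ⟨m, rfl⟩ := hlmem A hA
    exact htb _ (hSc _ (hwS _)).1 (hSc _ (hwS _)).2
  · intro p
    rw [hlget, hlget]
    have h1 : (1 : Fin l.length).val = 1 := by
      rw [Fin.val_one']
      exact Nat.mod_eq_of_lt (by omega)
    have hsv : ((p + 1 : Fin l.length)).val = (p.val + 1) % l.length := by
      rw [Fin.add_def, h1]
    rw [hsv]
    have hp : p.val < l.length := p.2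
    rcases Nat.lt_or_ge (p.val + 1) l.length with h | h
    · rw [Nat.mod_eq_of_lt h]
      exact (hwstep (k0 + p.val)).2
    · have hpl : p.val + 1 = l.length := by omega
      rw [hpl, Nat.mod_self]
      have he : w (k0 + 0) = w ((k0 + p.val) + 1) := by
        rw [Nat.add_zero, hk0]
        congr 1
        omega
      rw [he]
      exact (hwstep (k0 + p.val)).2

end Sink
section Greedy
variable {V : Type*} [Fintype V] [DecidableEq V] {G : SimpleGraph V} {c : Finset (Finset V)}
  {T : Finset V} {tv tb : Finset V → V}

lemma greedy_matching (hcol : IsColoring G c)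
    (huniq : ∀ d, IsColoring G d → d.card = c.card → d = c)
    (htb : ∀ A ∈ c, A.card = 2 → A = {tv A, tb A} ∧ tv A ≠ tb A) :
    ∀ R : Finset (Finset V), (∀ A ∈ R, A ∈ c ∧ A.card = 2) →
    ∃ φ : Finset V → Option (Finset V),
      (∀ A B : Finset V, φ A = some B →
        A ∈ R ∧ B ∈ R ∧ A ≠ B ∧ ¬ G.Adj (tv A) (tv B) ∧ φ B = some A) ∧
      (∀ A ∈ R, ∀ B ∈ R, A ≠ B → ¬ G.Adj (tv A) (tv B) →
        φ A = some B ∨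
        (∃ g, φ A = some g ∧ (g = B ∨ G.Adj (tb g) (tv B))) ∨
        (∃ h, φ B = some h ∧ (h = A ∨ G.Adj (tb h) (tv A)))) := by
  classical
  intro R
  induction R using Finset.strongInduction with
  | _ R IH =>
  intro hRc
  by_cases hE : ∃ A ∈ R, ∃ B ∈ R, A ≠ B ∧ ¬ G.Adj (tv A) (tv B)
  · obtain ⟨A₁, hA₁, B₁, hB₁, hne₁, hnadj₁⟩ := hE
    set E := R.filter (fun A => ∃ B ∈ R, A ≠ B ∧ ¬ G.Adj (tv A) (tv B)) with hEdef
    have hEne : E.Nonempty := ⟨A₁, Finset.mem_filter.mpr ⟨hA₁, B₁, hB₁, hne₁, hnadj₁⟩⟩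
    have hEc : ∀ A ∈ E, A ∈ c ∧ A.card = 2 := fun A hA => hRc A (Finset.mem_filter.mp hA).1
    obtain ⟨σ, hσE, hσ⟩ := sink_exists hcol huniq htb hEne hEc
    have hσR : σ ∈ R := (Finset.mem_filter.mp hσE).1
    set Nb := R.filter (fun B => σ ≠ B ∧ ¬ G.Adj (tv σ) (tv B)) with hNbdef
    have hNbne : Nb.Nonempty := by
      obtain ⟨B, hBR, hne, hnadj⟩ := (Finset.mem_filter.mp hσE).2
      exact ⟨B, Finset.mem_filter.mpr ⟨hBR, hne, hnadj⟩⟩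
    obtain ⟨g, hgNb, hg⟩ := sink_exists hcol huniq htb hNbne
      (fun A hA => hRc A (Finset.mem_filter.mp hA).1)
    have hgR : g ∈ R := (Finset.mem_filter.mp hgNb).1
    have hσg : σ ≠ g := (Finset.mem_filter.mp hgNb).2.1
    have hσgnadj : ¬ G.Adj (tv σ) (tv g) := (Finset.mem_filter.mp hgNb).2.2
    have hss : R \ {σ, g} ⊂ R :=
      Finset.sdiff_ssubset (by intro x hx; simp at hx; rcases hx with rfl | rfl <;> assumption)
        ⟨σ, by simp⟩
    obtain ⟨φ', h1', h2'⟩ := IH (R \ {σ, g}) hss (fun A hA => hRc A (Finset.mem_sdiff.mp hA).1)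
    set φ : Finset V → Option (Finset V) :=
      fun A => if A = σ then some g else if A = g then some σ else φ' A with hφdef
    have hφσ : φ σ = some g := by simp [hφdef]
    have hφg : φ g = some σ := by simp [hφdef, Ne.symm hσg]
    have hφother : ∀ A, A ≠ σ → A ≠ g → φ A = φ' A := by
      intro A h1 h2; simp [hφdef, h1, h2]
    refine ⟨φ, ?_, ?_⟩
    · intro A B h
      by_cases hA1 : A = σ
      · subst hA1
        rw [hφσ] at h
        obtain rfl := Option.some.inj h
        exact ⟨hσR, hgR, hσg, hσgnadj, hφg⟩
      by_cases hA2 : A = g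
      · subst hA2
        rw [hφg] at h
        obtain rfl := Option.some.inj h
        exact ⟨hgR, hσR, Ne.symm hσg, fun hadj => hσgnadj hadj.symm, hφσ⟩
      · rw [hφother A hA1 hA2] at h
        obtain ⟨hAR, hBR, hne, hnadj, hsym⟩ := h1' A B h
        have hBmem := Finset.mem_sdiff.mp hBR
        have hB1 : B ≠ σ := by intro hh; apply hBmem.2; simp [hh]
        have hB2 : B ≠ g := by intro hh; apply hBmem.2; simp [hh]
        refine ⟨(Finset.mem_sdiff.mp hAR).1, hBmem.1, hne, hnadj, ?_⟩
        rw [hφother B hB1 hB2]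
        exact hsym
    · intro A hA B hB hne hnadj
      by_cases hA1 : A = σ
      · subst hA1
        by_cases hB2 : B = g
        · subst hB2; exact Or.inl hφσ
        · refine Or.inr (Or.inl ⟨g, hφσ, Or.inr ?_⟩)
          have hBNb : B ∈ Nb := Finset.mem_filter.mpr ⟨hB, hne, hnadj⟩
          exact hg B hBNb (fun h => hB2 h.symm)
      by_cases hB1 : B = σ
      · subst hB1
        refine Or.inr (Or.inr ⟨g, hφσ, ?_⟩)
        by_cases hAg : g = A
        · exact Or.inl hAg
        · exact Or.inr (hg A
            (Finset.mem_filter.mpr ⟨hA, Ne.symm hne, fun h => hnadj h.symm⟩) hAg)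
      by_cases hA2 : A = g
      · refine Or.inr (Or.inl ⟨σ, by rw [hA2]; exact hφg, ?_⟩)
        have hBE : B ∈ E := Finset.mem_filter.mpr
          ⟨hB, A, hA, Ne.symm hne, fun h => hnadj h.symm⟩
        exact Or.inr (hσ B hBE (fun h => hB1 h.symm))
      by_cases hB2 : B = g
      · refine Or.inr (Or.inr ⟨σ, by rw [hB2]; exact hφg, ?_⟩)
        have hAE : A ∈ E := Finset.mem_filter.mpr ⟨hA, B, hB, hne, hnadj⟩
        exact Or.inr (hσ A hAE (fun h => hA1 h.symm))
      · have hAR' : A ∈ R \ {σ, g} := Finset.mem_sdiff.mpr ⟨hA, by simp [hA1, hA2]⟩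
        have hBR' : B ∈ R \ {σ, g} := Finset.mem_sdiff.mpr ⟨hB, by simp [hB1, hB2]⟩
        rcases h2' A hAR' B hBR' hne hnadj with h | ⟨g', hg', hc⟩ | ⟨h', hh', hc⟩
        · exact Or.inl (by rw [hφother A hA1 hA2]; exact h)
        · exact Or.inr (Or.inl ⟨g', by rw [hφother A hA1 hA2]; exact hg', hc⟩)
        · exact Or.inr (Or.inr ⟨h', by rw [hφother B hB1 hB2]; exact hh', hc⟩)
  · refine ⟨fun _ => none, ?_, ?_⟩
    · intro A B h; simp at h
    · intro A hA B hB hne hnadj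
      exact absurd ⟨A, hA, B, hB, hne, hnadj⟩ hE

end Greedy
section Facts
variable {V : Type*} [Fintype V] [DecidableEq V] {G : SimpleGraph V} {c : Finset (Finset V)}
  {T : Finset V} {tv tb : Finset V → V}

lemma anticlique_single {a : V} : IsAnticlique G {a} := by
  intro x hx y hy
  simp only [Finset.mem_singleton] at hx hy
  subst hx; subst hy
  exact G.irrefl

/-- A vertex in a singleton class is adjacent to every vertex of every other class. -/
lemma single_adj (hat : HasNoAntitriangle G) (hcol : IsColoring G c)
    (hmin2 : ∀ d, IsColoring G d → c.card ≤ d.card)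
    (huniq : ∀ d, IsColoring G d → d.card = c.card → d = c)
    {A B : Finset V} (hA : A ∈ c) (hB : B ∈ c) (hcard : A.card = 1) (hne : A ≠ B)
    {s : V} (hs : s ∈ A) {v : V} (hv : v ∈ B) : G.Adj s v := by
  classical
  by_contra hnadj
  obtain ⟨a, ha⟩ := Finset.card_eq_one.mp hcard
  rw [ha, Finset.mem_singleton] at hs
  subst hs
  have hAs : A = {s} := ha
  have hsv : s ≠ v := elt_ne hcol hA hB hne (hAs ▸ Finset.mem_singleton_self s) hv
  have hDsub : ({A, B} : Finset (Finset V)) ⊆ c := by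
    intro x hx; simp only [Finset.mem_insert, Finset.mem_singleton] at hx
    rcases hx with rfl | rfl <;> assumption
  have hDcard : ({A, B} : Finset (Finset V)).card = 2 := by
    rw [Finset.card_insert_of_notMem (by simpa using hne), Finset.card_singleton]
  have h2le : 2 ≤ c.card := by
    calc 2 = ({A, B} : Finset (Finset V)).card := hDcard.symm
    _ ≤ c.card := Finset.card_le_card hDsub
  have hBc2 := class_card_le_two hat hcol hB
  have hBc1 : 1 ≤ B.card := Finset.card_pos.mpr (hcol.1 B hB)
  have hsvC : ({s, v} : Finset V) ∉ c := by
    intro hm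
    by_cases hmeq : ({s, v} : Finset V) = A
    · rw [hAs] at hmeq
      have : v ∈ ({s} : Finset V) := hmeq ▸ (by simp)
      exact hsv (Finset.mem_singleton.mp this).symm
    · exact elt_ne hcol hm hA hmeq (by simp) (hAs ▸ Finset.mem_singleton_self s) rfl
  rcases (by omega : B.card = 1 ∨ B.card = 2) with hB1 | hB2
  · -- B = {v}
    obtain ⟨b, hb⟩ := Finset.card_eq_one.mp hB1
    rw [hb, Finset.mem_singleton] at hv
    subst hv
    have hcol' : IsColoring G ((c \ {A, B}) ∪ {{s, v}}) := by
      apply swap_coloring hcol hDsub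
      · rintro u ⟨C, hCD, huC⟩
        simp only [Finset.mem_insert, Finset.mem_singleton] at hCD
        refine ⟨{s, v}, by simp, ?_⟩
        rcases hCD with rfl | rfl
        · rw [hAs, Finset.mem_singleton] at huC; simp [huC]
        · rw [hb, Finset.mem_singleton] at huC; simp [huC]
      · intro B' hB' u hu
        simp only [Finset.mem_singleton] at hB'
        subst hB'
        simp only [Finset.mem_insert, Finset.mem_singleton] at hu
        rcases hu with rfl | rfl
        · exact ⟨A, by simp, hAs ▸ Finset.mem_singleton_self u⟩
        · exact ⟨B, by simp, hb ▸ Finset.mem_singleton_self u⟩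
      · intro B' hB'
        simp only [Finset.mem_singleton] at hB'
        subst hB'; exact ⟨s, by simp⟩
      · intro B' hB'
        simp only [Finset.mem_singleton] at hB'
        subst hB'; exact anticlique_pair hnadj
      · intro B₁ h₁ B₂ h₂ h₁₂
        simp only [Finset.mem_singleton] at h₁ h₂
        exact absurd (h₁.trans h₂.symm) h₁₂
    have hNc1 : ∀ B' ∈ ({{s, v}} : Finset (Finset V)), B' ∉ c := by
      intro B' hB'
      simp only [Finset.mem_singleton] at hB'
      subst hB'; exact hsvC
    have hcard' := swap_card (c := c) hDsub hNc1
    rw [hDcard, Finset.card_singleton] at hcard'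
    have := hmin2 _ hcol'
    rw [hcard'] at this
    omega
  · -- B = {v, w}
    have herase : (B.erase v).card = 1 := by
      rw [Finset.card_erase_of_mem hv, hB2]
    obtain ⟨w, hw⟩ := Finset.card_eq_one.mp herase
    have hwB : w ∈ B := Finset.mem_of_mem_erase (hw ▸ Finset.mem_singleton_self w)
    have hwv : w ≠ v := Finset.ne_of_mem_erase (hw ▸ Finset.mem_singleton_self w)
    have hBvw : B = insert v {w} := by rw [← hw, Finset.insert_erase hv]
    have hws : w ≠ s := fun h => elt_ne hcol hB hA (Ne.symm hne) hwB
      (hAs ▸ Finset.mem_singleton_self s) h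
    have hwC : ({w} : Finset V) ∉ c := by
      intro hm
      by_cases hmeq : ({w} : Finset V) = B
      · rw [hBvw] at hmeq
        have : v ∈ ({w} : Finset V) := hmeq ▸ (by simp)
        exact hwv (Finset.mem_singleton.mp this).symm
      · exact elt_ne hcol hm hB hmeq (by simp) hwB rfl
    have hNne : ({s, v} : Finset V) ≠ {w} := by
      intro h
      have : s ∈ ({w} : Finset V) := h ▸ (by simp)
      exact hws (Finset.mem_singleton.mp this).symm
    have hcol' : IsColoring G ((c \ {A, B}) ∪ {{s, v}, {w}}) := by
      apply swap_coloring hcol hDsub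
      · rintro u ⟨C, hCD, huC⟩
        simp only [Finset.mem_insert, Finset.mem_singleton] at hCD
        rcases hCD with rfl | rfl
        · rw [hAs, Finset.mem_singleton] at huC
          exact ⟨{s, v}, by simp, by simp [huC]⟩
        · rw [hBvw] at huC
          simp only [Finset.mem_insert, Finset.mem_singleton] at huC
          rcases huC with rfl | rfl
          · exact ⟨{s, u}, by simp, by simp⟩
          · exact ⟨{u}, by simp, by simp⟩
      · intro B' hB' u hu
        simp only [Finset.mem_insert, Finset.mem_singleton] at hB'
        rcases hB' with rfl | rfl
        · simp only [Finset.mem_insert, Finset.mem_singleton] at hu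
          rcases hu with rfl | rfl
          · exact ⟨A, by simp, hAs ▸ Finset.mem_singleton_self u⟩
          · exact ⟨B, by simp, hv⟩
        · simp only [Finset.mem_singleton] at hu
          subst hu
          exact ⟨B, by simp, hwB⟩
      · intro B' hB'
        simp only [Finset.mem_insert, Finset.mem_singleton] at hB'
        rcases hB' with rfl | rfl
        · exact ⟨s, by simp⟩
        · exact ⟨w, by simp⟩
      · intro B' hB'
        simp only [Finset.mem_insert, Finset.mem_singleton] at hB'
        rcases hB' with rfl | rfl
        · exact anticlique_pair hnadj
        · exact anticlique_single
      · intro B₁ h₁ B₂ h₂ h₁₂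
        simp only [Finset.mem_insert, Finset.mem_singleton] at h₁ h₂
        have hd : Disjoint ({s, v} : Finset V) {w} := by
          rw [Finset.disjoint_left]
          intro x hx hx'
          simp only [Finset.mem_insert, Finset.mem_singleton] at hx hx'
          subst hx'
          rcases hx with h | h
          · exact hws h
          · exact hwv h
        rcases h₁ with rfl | rfl <;> rcases h₂ with rfl | rfl
        · exact absurd rfl h₁₂
        · exact hd
        · exact hd.symm
        · exact absurd rfl h₁₂
    have hNc : ∀ B' ∈ ({{s, v}, {w}} : Finset (Finset V)), B' ∉ c := by
      intro B' hB'
      simp only [Finset.mem_insert, Finset.mem_singleton] at hB'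
      rcases hB' with rfl | rfl
      · exact hsvC
      · exact hwC
    have hcard' := swap_card (c := c) hDsub hNc
    rw [hDcard] at hcard'
    have hN2 : ({{s, v}, {w}} : Finset (Finset V)).card = 2 := by
      rw [Finset.card_insert_of_notMem (by simpa using hNne), Finset.card_singleton]
    rw [hN2] at hcard'
    have hcardeq : ((c \ {A, B}) ∪ {{s, v}, {w}}).card = c.card := by omega
    have hceq := huniq _ hcol' hcardeq
    have : ({w} : Finset V) ∈ (c \ {A, B}) ∪ {{s, v}, {w}} :=
      Finset.mem_union_right _ (by simp)
    rw [hceq] at this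
    exact hwC this

/-- If a is nonadjacent to x ∈ B, it is adjacent to the other vertex of B. -/
lemma adj_other (hat : HasNoAntitriangle G) (hcol : IsColoring G c)
    {A B : Finset V} (hA : A ∈ c) (hB : B ∈ c) (hne : A ≠ B)
    {a x y : V} (ha : a ∈ A) (hx : x ∈ B) (hy : y ∈ B) (hxy : x ≠ y)
    (hnadj : ¬ G.Adj a x) : G.Adj a y := by
  by_contra h
  apply hat
  refine ⟨{a, x, y}, ?_, anticlique_triple hnadj h (hcol.2.2.2 B hB x hx y hy)⟩
  exact Finset.card_eq_three.mpr
    ⟨a, x, y, elt_ne hcol hA hB hne ha hx, elt_ne hcol hA hB hne ha hy, hxy, rfl⟩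

/-- mutual swap validity: nonadjacent transversal vertices of two pair classes force
the non-transversal vertices to be adjacent. -/
lemma adj_tb_tb (hcol : IsColoring G c)
    (huniq : ∀ d, IsColoring G d → d.card = c.card → d = c)
    {A B : Finset V} (hA : A ∈ c) (hB : B ∈ c) (hne : A ≠ B)
    {a1 a2 b1 b2 : V} (hA2 : A = {a1, a2}) (ha12 : a1 ≠ a2)
    (hB2 : B = {b1, b2}) (hb12 : b1 ≠ b2)
    (hnadj : ¬ G.Adj a1 b1) : G.Adj a2 b2 := by
  classical
  by_contra h
  set X : Finset V → V := fun C => if C = A then a2 else b1 with hX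
  set Y : Finset V → V := fun C => if C = A then a1 else b2 with hY
  haveI : NeZero ([A, B] : List (Finset V)).length := ⟨by simp⟩
  apply no_rotation hcol huniq X Y [A, B] (by simp) (by simp [hne])
  · intro C hC
    simp only [List.mem_cons, List.not_mem_nil, or_false] at hC
    rcases hC with rfl | rfl <;> assumption
  · intro C hC
    simp only [List.mem_cons, List.not_mem_nil, or_false] at hC
    rcases hC with rfl | rfl
    · have hXA : X C = a2 := by simp [hX]
      have hYA : Y C = a1 := by simp [hY]
      rw [hXA, hYA]
      exact ⟨by rw [hA2, Finset.pair_comm], Ne.symm ha12⟩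
    · have hXB : X C = b1 := by simp [hX, Ne.symm hne]
      have hYB : Y C = b2 := by simp [hY, Ne.symm hne]
      rw [hXB, hYB]
      exact ⟨hB2, hb12⟩
  · intro i
    fin_cases i
    · show ¬ G.Adj (Y (([A, B] : List (Finset V)).get 0)) (X (([A, B] : List (Finset V)).get (0 + 1)))
      have h01 : ((0 : Fin 2) + 1) = 1 := by rfl
      rw [h01]
      show ¬ G.Adj (Y A) (X B)
      have hXB : X B = b1 := by simp [hX, Ne.symm hne]
      have hYA : Y A = a1 := by simp [hY]
      rw [hXB, hYA]
      exact hnadj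
    · show ¬ G.Adj (Y (([A, B] : List (Finset V)).get 1)) (X (([A, B] : List (Finset V)).get (1 + 1)))
      have h11 : ((1 : Fin 2) + 1) = 0 := by rfl
      rw [h11]
      show ¬ G.Adj (Y B) (X A)
      have hXA : X A = a2 := by simp [hX]
      have hYB : Y B = b2 := by simp [hY, Ne.symm hne]
      rw [hXA, hYB]
      exact fun hh => h hh.symm

end Facts
theorem unique_coloring_rooted_shallow_clique_minor {V : Type*} [Fintype V] [DecidableEq V]
    (G : SimpleGraph V) (hat : HasNoAntitriangle G) (c : Finset (Finset V))
    (hmin : MinColoring G c)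
    (huniq : ∀ d, IsColoring G d → d.card = c.card → d = c)
    (T : Finset V) (hT : Traversed T c) :
    ∃ K : Finset (Finset V), IsShallowCliqueMinor G K ∧ K.card = c.card ∧
      Traversed T K := by
  classical
  obtain ⟨hcol, hmin2⟩ := hmin
  by_cases hc0 : c = ∅
  · refine ⟨∅, ⟨⟨?_, ?_, ?_⟩, ?_⟩, by simp [hc0], ?_⟩
    · intro A hA; exact absurd hA (Finset.notMem_empty A)
    · intro A hA; exact absurd hA (Finset.notMem_empty A)
    · intro A hA; exact absurd hA (Finset.notMem_empty A)
    · intro A hA; exact absurd hA (Finset.notMem_empty A)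
    · intro A hA; exact absurd hA (Finset.notMem_empty A)
  have hVne : Nonempty V := by
    obtain ⟨A, hA⟩ := Finset.nonempty_iff_ne_empty.mpr hc0
    obtain ⟨v, _⟩ := hcol.1 A hA
    exact ⟨v⟩
  set tv : Finset V → V := fun A =>
    if h : ∃ x, T ∩ A = {x} then h.choose else Classical.choice hVne with htvdef
  have htv : ∀ A ∈ c, T ∩ A = {tv A} := by
    intro A hA
    have h : ∃ x, T ∩ A = {x} := Finset.card_eq_one.mp (hT A hA)
    have heq : tv A = h.choose := by rw [htvdef]; exact dif_pos h
    rw [heq]; exact h.choose_spec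
  have htvTA : ∀ A ∈ c, tv A ∈ T ∩ A := by
    intro A hA
    rw [htv A hA]; exact Finset.mem_singleton_self _
  have htvA : ∀ A ∈ c, tv A ∈ A := fun A hA => (Finset.mem_inter.mp (htvTA A hA)).2
  have htvT : ∀ A ∈ c, tv A ∈ T := fun A hA => (Finset.mem_inter.mp (htvTA A hA)).1
  set tb : Finset V → V := fun A =>
    if h : ∃ x, A \ {tv A} = {x} then h.choose else Classical.choice hVne with htbdef
  have htb : ∀ A ∈ c, A.card = 2 → A \ {tv A} = {tb A} := by
    intro A hA h2
    have hsd : (A \ {tv A}).card = 1 := by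
      rw [Finset.card_sdiff_of_subset (Finset.singleton_subset_iff.mpr (htvA A hA)), h2,
        Finset.card_singleton]
    have h : ∃ x, A \ {tv A} = {x} := Finset.card_eq_one.mp hsd
    have heq : tb A = h.choose := by rw [htbdef]; exact dif_pos h
    rw [heq]; exact h.choose_spec
  have htbmem : ∀ A ∈ c, A.card = 2 → tb A ∈ A ∧ tb A ≠ tv A := by
    intro A hA h2
    have : tb A ∈ A \ {tv A} := (htb A hA h2) ▸ Finset.mem_singleton_self _
    rw [Finset.mem_sdiff, Finset.mem_singleton] at this
    exact this
  have htbrep : ∀ A ∈ c, A.card = 2 → A = {tv A, tb A} ∧ tv A ≠ tb A := by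
    intro A hA h2
    refine ⟨?_, Ne.symm (htbmem A hA h2).2⟩
    have h1 := htb A hA h2
    rw [Finset.sdiff_singleton_eq_erase] at h1
    have h3 : insert (tv A) (A.erase (tv A)) = A := Finset.insert_erase (htvA A hA)
    rw [h1] at h3
    exact h3.symm
  have htbnotT : ∀ A ∈ c, A.card = 2 → tb A ∉ T := by
    intro A hA h2 hmem
    have h1 : tb A ∈ T ∩ A := Finset.mem_inter.mpr ⟨hmem, (htbmem A hA h2).1⟩
    rw [htv A hA, Finset.mem_singleton] at h1
    exact (htbmem A hA h2).2 h1
  set R := c.filter (fun A => A.card = 2) with hRdef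
  have hRc : ∀ A ∈ R, A ∈ c ∧ A.card = 2 := fun A hA =>
    ⟨(Finset.mem_filter.mp hA).1, (Finset.mem_filter.mp hA).2⟩
  obtain ⟨φ, hφ1, hφ2⟩ := greedy_matching (tv := tv) (tb := tb) hcol huniq htbrep R hRc
  set S : Finset V → Finset V := fun A => (φ A).elim {tv A} (fun g => {tv A, tb g}) with hSdef
  have hS1 : ∀ A, φ A = none → S A = {tv A} := by intro A h; simp [hSdef, h]
  have hS2 : ∀ A g, φ A = some g → S A = {tv A, tb g} := by intro A g h; simp [hSdef, h]
  have htvS : ∀ A, tv A ∈ S A := by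
    intro A
    cases hφA : φ A with
    | none => rw [hS1 A hφA]; simp
    | some g => rw [hS2 A g hφA]; simp
  have hSelem : ∀ A x, x ∈ S A → x = tv A ∨ ∃ g, φ A = some g ∧ x = tb g := by
    intro A x hx
    cases hφA : φ A with
    | none =>
      rw [hS1 A hφA, Finset.mem_singleton] at hx
      exact Or.inl hx
    | some g =>
      rw [hS2 A g hφA] at hx
      simp only [Finset.mem_insert, Finset.mem_singleton] at hx
      rcases hx with h | h
      · exact Or.inl h
      · exact Or.inr ⟨g, rfl, h⟩
  have hφfacts : ∀ A g, φ A = some g →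
      g ∈ c ∧ g.card = 2 ∧ A ∈ c ∧ A.card = 2 ∧ A ≠ g ∧ ¬ G.Adj (tv A) (tv g) ∧
        φ g = some A := by
    intro A g h
    obtain ⟨hAR, hgR, hne, hnadj, hsym⟩ := hφ1 A g h
    exact ⟨(hRc g hgR).1, (hRc g hgR).2, (hRc A hAR).1, (hRc A hAR).2, hne, hnadj, hsym⟩
  have hSinj : ∀ A ∈ c, ∀ B ∈ c, S A = S B → A = B := by
    intro A hA B hB hSeq
    have h1 : tv A ∈ S B := hSeq ▸ htvS A
    rcases hSelem B (tv A) h1 with h | ⟨g, hφB, hgeq⟩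
    · by_contra hne
      exact elt_ne hcol hA hB hne (htvA A hA) (htvA B hB) h
    · obtain ⟨hgc, hg2, _⟩ := hφfacts B g hφB
      exact absurd (hgeq ▸ htvT A hA) (htbnotT g hgc hg2)
  set K := c.image S with hKdef
  have hKcard : K.card = c.card :=
    Finset.card_image_of_injOn (fun A hA B hB h => hSinj A hA B hB h)
  have hTS : ∀ A ∈ c, T ∩ S A = {tv A} := by
    intro A hA
    cases hφA : φ A with
    | none =>
      rw [hS1 A hφA, Finset.inter_comm]
      exact Finset.singleton_inter_of_mem (htvT A hA)
    | some g =>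
      rw [hS2 A g hφA]
      obtain ⟨hgc, hg2, _⟩ := hφfacts A g hφA
      ext x
      simp only [Finset.mem_inter, Finset.mem_insert, Finset.mem_singleton]
      constructor
      · rintro ⟨hxT, rfl | rfl⟩
        · rfl
        · exact absurd hxT (htbnotT g hgc hg2)
      · rintro rfl
        exact ⟨htvT A hA, Or.inl rfl⟩
  have hmut : ∀ A B : Finset V, A ∈ c → B ∈ c → A.card = 2 → B.card = 2 → A ≠ B →
      ¬ G.Adj (tv A) (tv B) → φ A = some B → SetsAdj G (S A) (S B) := by
    intro A B hA hB h2A h2B hAB hnadj hm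
    have hsym := (hφ1 A B hm).2.2.2.2
    have hAdj2 : G.Adj (tb A) (tb B) :=
      adj_tb_tb hcol huniq hA hB hAB (htbrep A hA h2A).1 (htbrep A hA h2A).2
        (htbrep B hB h2B).1 (htbrep B hB h2B).2 hnadj
    exact ⟨tb B, by rw [hS2 A B hm]; simp, tb A, by rw [hS2 B A hsym]; simp, hAdj2.symm⟩
  refine ⟨K, ⟨⟨?_, ?_, ?_⟩, ?_⟩, hKcard, ?_⟩
  · -- nonempty
    intro A' hA'
    obtain ⟨A, hA, rfl⟩ := Finset.mem_image.mp hA'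
    exact ⟨tv A, htvS A⟩
  · -- connected
    intro A' hA'
    obtain ⟨A, hA, rfl⟩ := Finset.mem_image.mp hA'
    cases hφA : φ A with
    | none => rw [hS1 A hφA]; exact connSet_singleton G (tv A)
    | some g =>
      rw [hS2 A g hφA]
      obtain ⟨hgc, hg2, hAc, hA2, hne, hnadj, _⟩ := hφfacts A g hφA
      have hadj : G.Adj (tv A) (tb g) :=
        adj_other hat hcol hAc hgc hne (htvA A hAc) (htvA g hgc) (htbmem g hgc hg2).1
          (Ne.symm (htbmem g hgc hg2).2) hnadj
      exact connSet_pair hadj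
  · -- pairwise disjoint and adjacent
    intro A' hA' B' hB' hne'
    obtain ⟨A, hA, rfl⟩ := Finset.mem_image.mp hA'
    obtain ⟨B, hB, rfl⟩ := Finset.mem_image.mp hB'
    have hAB : A ≠ B := fun h => hne' (h ▸ rfl)
    constructor
    · -- disjoint
      rw [Finset.disjoint_left]
      intro x hxA hxB
      rcases hSelem A x hxA with rfl | ⟨g, hφA, rfl⟩
      · rcases hSelem B (tv A) hxB with h2 | ⟨g', hφB, h2⟩
        · exact elt_ne hcol hA hB hAB (htvA A hA) (htvA B hB) h2
        · obtain ⟨hgc, hg2, _⟩ := hφfacts B g' hφB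
          exact absurd (h2 ▸ htvT A hA) (htbnotT g' hgc hg2)
      · rcases hSelem B (tb g) hxB with h2 | ⟨g', hφB, h2⟩
        · obtain ⟨hgc, hg2, _⟩ := hφfacts A g hφA
          exact absurd (h2 ▸ (htbnotT g hgc hg2)) (by intro hcon; exact hcon (htvT B hB))
        · by_cases hgg : g = g'
          · subst hgg
            have hs1 := (hφ1 A g hφA).2.2.2.2
            have hs2 := (hφ1 B g hφB).2.2.2.2
            rw [hs1] at hs2
            exact hAB (Option.some.inj hs2)
          · obtain ⟨hgc, hg2, _⟩ := hφfacts A g hφA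
            obtain ⟨hgc', hg2', _⟩ := hφfacts B g' hφB
            exact elt_ne hcol hgc hgc' hgg (htbmem g hgc hg2).1 (htbmem g' hgc' hg2').1 h2
    · -- SetsAdj
      by_cases hadj : G.Adj (tv A) (tv B)
      · exact ⟨tv A, htvS A, tv B, htvS B, hadj⟩
      have h1A : 1 ≤ A.card := Finset.card_pos.mpr (hcol.1 A hA)
      have h2A : A.card ≤ 2 := class_card_le_two hat hcol hA
      have h1B : 1 ≤ B.card := Finset.card_pos.mpr (hcol.1 B hB)
      have h2B : B.card ≤ 2 := class_card_le_two hat hcol hB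
      rcases (by omega : A.card = 1 ∨ A.card = 2) with hA1 | hA2
      · exact absurd (single_adj hat hcol hmin2 huniq hA hB hA1 hAB (htvA A hA) (htvA B hB))
          hadj
      rcases (by omega : B.card = 1 ∨ B.card = 2) with hB1 | hB2
      · exact absurd
          (single_adj hat hcol hmin2 huniq hB hA hB1 (Ne.symm hAB) (htvA B hB) (htvA A hA))
          (fun h => hadj h.symm)
      have hAR : A ∈ R := Finset.mem_filter.mpr ⟨hA, hA2⟩
      have hBR : B ∈ R := Finset.mem_filter.mpr ⟨hB, hB2⟩
      rcases hφ2 A hAR B hBR hAB hadj with hm | ⟨g, hφA, hcase⟩ | ⟨h', hφB, hcase⟩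
      · exact hmut A B hA hB hA2 hB2 hAB hadj hm
      · rcases hcase with rfl | hadj2
        · exact hmut A g hA hB hA2 hB2 hAB hadj hφA
        · exact ⟨tb g, by rw [hS2 A g hφA]; simp, tv B, htvS B, hadj2⟩
      · rcases hcase with rfl | hadj2
        · obtain ⟨a, ha, b, hb, hab⟩ :=
            hmut B h' hB hA hB2 hA2 (Ne.symm hAB) (fun h => hadj h.symm) hφB
          exact ⟨b, hb, a, ha, hab.symm⟩
        · exact ⟨tv A, htvS A, tb h', by rw [hS2 B h' hφB]; simp, hadj2.symm⟩
  · -- shallow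
    intro A' hA'
    obtain ⟨A, hA, rfl⟩ := Finset.mem_image.mp hA'
    cases hφA : φ A with
    | none => rw [hS1 A hφA]; simp
    | some g =>
      rw [hS2 A g hφA]
      calc ({tv A, tb g} : Finset V).card ≤ ({tb g} : Finset V).card + 1 :=
        Finset.card_insert_le _ _
      _ ≤ 2 := by simp
  · -- traversed
    intro A' hA'
    obtain ⟨A, hA, rfl⟩ := Finset.mem_image.mp hA'
    rw [hTS A hA]
    exact Finset.card_singleton _
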